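/- For every integer n ≥ 2 there exists a non-zero polynomial Q in n + 1 real variables s₁, …, sₙ, δ, with real coefficients, which is monic of degree 2^(n-1) in the variables s₁,…,sₙ (in the sense that the coefficient polynomial H_{n,2^{n-1}} is monic of total degree 2^(n-1)) and involves only even powers of δ, such that for all real numbers t₁, …, tₙ with t₁ + ⋯ + tₙ = δ one has Q(t₁², t₂², …, tₙ², δ) = 0. Moreover Q can be written as Q = Σ_{j=0}^{2^{n-1}} H_{n,j}(s₁,…,sₙ) δ^{2(2^{n-1}−j)} where H_{n,0} = 1 and each H_{n,j} is homogeneous of degree j. -/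

import Mathlib

open MvPolynomial Finset

noncomputable section SqElimSection

namespace SqElim

variable {n : ℕ}

private lemma wdeg (d : Fin n →₀ ℕ) : (Finsupp.weight 1) d = d.sum fun _ e => e := by
  simp [Finsupp.weight_apply, Finsupp.sum]

/-- The linear form `Σ_j ± X j` with signs given by `ε`. -/
def L (ε : Fin n → Bool) : MvPolynomial (Fin n) ℝ :=
  ∑ j, if ε j then X j else - X j

/-- The product `∏_ε (X - L ε)` as a polynomial in `δ` over `MvPolynomial`. -/
def Pd (n : ℕ) : Polynomial (MvPolynomial (Fin n) ℝ) :=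
  ∏ ε : Fin n → Bool, (Polynomial.X - Polynomial.C (L ε))

/-- Halve all the exponents of a polynomial. -/
def halve (q : MvPolynomial (Fin n) ℝ) : MvPolynomial (Fin n) ℝ :=
  ∑ d ∈ q.support, monomial (d.mapRange (· / 2) (by norm_num)) (q.coeff d)

/-- Double all exponents of a monomial. -/
def double (e : Fin n →₀ ℕ) : Fin n →₀ ℕ := e.mapRange (2 * ·) (by norm_num)

/-- All exponents appearing in `q` are even. -/
def EvenSupp (q : MvPolynomial (Fin n) ℝ) : Prop :=
  ∀ d : Fin n →₀ ℕ, q.coeff d ≠ 0 → ∀ i, Even (d i)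

lemma half_eq_iff {q : MvPolynomial (Fin n) ℝ} (hq : EvenSupp q) {d : Fin n →₀ ℕ}
    (hd : q.coeff d ≠ 0) (e : Fin n →₀ ℕ) :
    d.mapRange (· / 2) (by norm_num) = e ↔ d = double e := by
  constructor
  · rintro rfl
    ext i
    rw [double, Finsupp.mapRange_apply, Finsupp.mapRange_apply,
      Nat.mul_div_cancel' (hq d hd i).two_dvd]
  · rintro rfl
    ext i
    rw [double, Finsupp.mapRange_apply, Finsupp.mapRange_apply,
      Nat.mul_div_cancel_left _ (by norm_num)]

lemma coeff_halve {q : MvPolynomial (Fin n) ℝ} (hq : EvenSupp q) (e : Fin n →₀ ℕ) :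
    (halve q).coeff e = q.coeff (double e) := by
  classical
  rw [halve, coeff_sum]
  have key : ∀ d ∈ q.support,
      coeff e (monomial (d.mapRange (· / 2) (by norm_num)) (q.coeff d))
        = if d = double e then q.coeff d else 0 := by
    intro d hd
    rw [coeff_monomial,
      if_congr (half_eq_iff hq (mem_support_iff.mp hd) e) rfl rfl]
  rw [Finset.sum_congr rfl key, Finset.sum_ite_eq']
  by_cases hs : double e ∈ q.support
  · rw [if_pos hs]
  · rw [if_neg hs, notMem_support_iff.mp hs]

lemma eval_halve {q : MvPolynomial (Fin n) ℝ} (hq : EvenSupp q) (t : Fin n → ℝ) :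
    eval (fun i => t i ^ 2) (halve q) = eval t q := by
  conv_rhs => rw [q.as_sum]
  rw [halve, map_sum, map_sum]
  refine Finset.sum_congr rfl fun d hd => ?_
  rw [eval_monomial, eval_monomial,
    Finsupp.prod_mapRange_index (fun a => pow_zero _)]
  congr 1
  refine Finsupp.prod_congr fun i _ => ?_
  rw [← pow_mul, Nat.mul_div_cancel' (hq d (mem_support_iff.mp hd) i).two_dvd]

lemma homog_halve {q : MvPolynomial (Fin n) ℝ} (hq : EvenSupp q) {m : ℕ}
    (h : q.IsHomogeneous (2 * m)) : (halve q).IsHomogeneous m := by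
  intro e he
  rw [coeff_halve hq] at he
  have h2 := h he
  rw [wdeg, double, Finsupp.sum_mapRange_index (fun a => rfl),
    ← Finsupp.mul_sum] at h2
  rw [wdeg]
  omega

/-- The sign flip of the `i`-th variable. -/
def flip (i : Fin n) : MvPolynomial (Fin n) ℝ →ₐ[ℝ] MvPolynomial (Fin n) ℝ :=
  bind₁ fun j => if j = i then - X j else X j

lemma flip_monomial (i : Fin n) (d : Fin n →₀ ℕ) (c : ℝ) :
    flip i (monomial d c) = (-1 : ℝ) ^ (d i) • monomial d c := by
  classical
  rw [flip, bind₁_monomial, monomial_eq, smul_eq_C_mul, map_pow, map_neg, map_one,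
    Finsupp.prod]
  by_cases hi : i ∈ d.support
  · rw [← Finset.mul_prod_erase _ _ hi, ← Finset.mul_prod_erase _ (fun j => X j ^ d j) hi,
      if_pos rfl, neg_pow,
      Finset.prod_congr rfl (fun j hj => by rw [if_neg (Finset.ne_of_mem_erase hj)])]
    ring
  · have h0 : d i = 0 := Finsupp.notMem_support_iff.mp hi
    rw [h0, pow_zero, one_mul,
      Finset.prod_congr rfl (fun j hj => by rw [if_neg (ne_of_mem_of_not_mem hj hi)])]

lemma coeff_flip (i : Fin n) (q : MvPolynomial (Fin n) ℝ) (d : Fin n →₀ ℕ) :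
    (flip i q).coeff d = (-1 : ℝ) ^ (d i) * q.coeff d := by
  classical
  conv_lhs => rw [q.as_sum, map_sum]
  rw [coeff_sum]
  have key : ∀ d' ∈ q.support, coeff d ((flip i) (monomial d' (q.coeff d')))
      = if d' = d then (-1:ℝ) ^ (d' i) * q.coeff d' else 0 := by
    intro d' _
    rw [flip_monomial, coeff_smul, coeff_monomial]
    by_cases h : d' = d <;> simp [h]
  rw [Finset.sum_congr rfl key, Finset.sum_ite_eq']
  by_cases hd : d ∈ q.support
  · rw [if_pos hd]
  · rw [if_neg hd, notMem_support_iff.mp hd, mul_zero]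

lemma flip_L (i : Fin n) (ε : Fin n → Bool) :
    flip i (L ε) = L (Function.update ε i (! ε i)) := by
  rw [L, map_sum, L]
  refine Finset.sum_congr rfl fun j _ => ?_
  rcases eq_or_ne j i with rfl | hj
  · rw [Function.update_self]
    cases h : ε j <;> simp [h, flip, bind₁_X_right]
  · rw [Function.update_of_ne hj]
    cases h : ε j <;> simp [h, flip, bind₁_X_right, if_neg hj]

lemma update_invol (i : Fin n) :
    Function.Involutive (fun ε : Fin n → Bool => Function.update ε i (! ε i)) := by
  intro ε
  funext j
  rcases eq_or_ne j i with rfl | hj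
  · simp
  · simp [Function.update_of_ne hj]

lemma flip_Pd (i : Fin n) : (Pd n).map (flip i).toRingHom = Pd n := by
  rw [Pd, Polynomial.map_prod]
  have key : ∀ ε : Fin n → Bool,
      (Polynomial.X - Polynomial.C (L ε)).map (flip i).toRingHom
        = Polynomial.X - Polynomial.C (L (Function.update ε i (! ε i))) := by
    intro ε
    rw [Polynomial.map_sub, Polynomial.map_X, Polynomial.map_C]
    congr 1
    exact congrArg Polynomial.C (flip_L i ε)
  rw [Finset.prod_congr rfl fun ε _ => key ε]
  have := Equiv.prod_comp (Function.Involutive.toPerm _ (update_invol i))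
    (fun ε : Fin n → Bool => Polynomial.X - Polynomial.C (L ε))
  simpa [Function.Involutive.coe_toPerm] using this

lemma evenSupp_Pd_coeff (k : ℕ) : EvenSupp ((Pd n).coeff k) := by
  intro d hd i
  have h1 : flip i ((Pd n).coeff k) = (Pd n).coeff k := by
    have := congrArg (fun p => Polynomial.coeff p k) (flip_Pd i)
    simpa [Polynomial.coeff_map] using this
  have h2 := congrArg (fun p => coeff d p) h1
  simp only [coeff_flip] at h2
  have h3 : (-1 : ℝ) ^ (d i) = 1 :=
    mul_right_cancel₀ hd (h2.trans (one_mul _).symm)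
  exact (neg_one_pow_eq_one_iff_even (by norm_num)).mp h3

/-- The homogeneous version of `Pd` in `n+1` variables. -/
def Pbig (n : ℕ) : MvPolynomial (Fin (n + 1)) ℝ :=
  ∏ ε : Fin n → Bool, (X 0 - ∑ j : Fin n, if ε j then X j.succ else - X j.succ)

lemma finSuccEquiv_Pbig : finSuccEquiv ℝ n (Pbig n) = Pd n := by
  rw [Pbig, map_prod, Pd]
  refine Finset.prod_congr rfl fun ε _ => ?_
  rw [map_sub, finSuccEquiv_X_zero]
  congr 1
  rw [map_sum, L, map_sum]
  refine Finset.sum_congr rfl fun j _ => ?_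
  cases h : ε j <;> simp [h, finSuccEquiv_X_succ]

lemma homog_Pbig : (Pbig n).IsHomogeneous (2 ^ n) := by
  have hcard : ∑ _ε : Fin n → Bool, 1 = 2 ^ n := by
    simp [Fintype.card_fun]
  rw [Pbig, ← hcard]
  refine IsHomogeneous.prod _ _ _ fun ε _ => ?_
  refine (isHomogeneous_X ℝ 0).sub (IsHomogeneous.sum _ _ _ fun j _ => ?_)
  cases h : ε j
  · simpa [h] using (isHomogeneous_X ℝ j.succ).neg
  · simpa [h] using isHomogeneous_X ℝ j.succ

lemma coeff_Pd_coeff (k : ℕ) (d : Fin n →₀ ℕ) :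
    ((Pd n).coeff k).coeff d = (Pbig n).coeff (Finsupp.cons k d) := by
  rw [← finSuccEquiv_coeff_coeff, finSuccEquiv_Pbig]

lemma homog_Pd_coeff (k : ℕ) : ((Pd n).coeff k).IsHomogeneous (2 ^ n - k) := by
  intro d hd
  rw [coeff_Pd_coeff] at hd
  have h2 := homog_Pbig hd
  rw [wdeg, Finsupp.sum_cons] at h2
  rw [wdeg]
  omega

lemma Pd_coeff_odd (hn : 1 ≤ n) (k : ℕ) (hk : ¬ Even k) : (Pd n).coeff k = 0 := by
  classical
  by_contra h
  obtain ⟨d, hd⟩ := ne_zero_iff.mp h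
  have h2 : (Pbig n).coeff (Finsupp.cons k d) ≠ 0 := by
    rwa [← coeff_Pd_coeff]
  have h3 := homog_Pbig h2
  rw [wdeg, Finsupp.sum_cons] at h3
  have h4 : 2 ∣ d.sum fun _ e => e := by
    rw [Finsupp.sum]
    exact Finset.dvd_sum fun i _ => ((evenSupp_Pd_coeff k) d hd i).two_dvd
  have h5 : 2 ∣ 2 ^ n := dvd_pow_self 2 (by omega)
  rw [Nat.even_iff] at hk
  omega

lemma monic_Pd : (Pd n).Monic :=
  Polynomial.monic_prod_of_monic _ _ fun _ _ => Polynomial.monic_X_sub_C _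

lemma natDegree_Pd : (Pd n).natDegree = 2 ^ n := by
  rw [Pd, Polynomial.natDegree_prod_of_monic _ _ fun _ _ => Polynomial.monic_X_sub_C _]
  simp [Fintype.card_fun]

lemma double_eq_zero (e : Fin n →₀ ℕ) : double e = 0 ↔ e = 0 := by
  constructor <;> intro h <;> ext i
  · have h2 := Finsupp.ext_iff.mp h i
    simp only [double, Finsupp.mapRange_apply, Finsupp.coe_zero, Pi.zero_apply] at h2
    simpa using h2
  · simp [double, Finsupp.mapRange_apply, h]

lemma evenSupp_one : EvenSupp (1 : MvPolynomial (Fin n) ℝ) := by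
  classical
  intro d hd i
  rw [coeff_one] at hd
  by_cases h : (0 : Fin n →₀ ℕ) = d
  · rw [← h]
    simp
  · rw [if_neg h] at hd
    exact absurd rfl hd

lemma halve_one : halve (1 : MvPolynomial (Fin n) ℝ) = 1 := by
  classical
  ext e
  rw [coeff_halve evenSupp_one, coeff_one, coeff_one,
    if_congr (by rw [eq_comm, double_eq_zero, eq_comm]) rfl rfl]

/-- Value of a homogeneous polynomial's `single` coefficient via evaluation. -/
lemma coeff_single_eq_eval {p : MvPolynomial (Fin n) ℝ} {D : ℕ} (i₀ : Fin n)
    (hp : p.IsHomogeneous D) :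
    p.coeff (Finsupp.single i₀ D) = eval (fun j : Fin n => if j = i₀ then (1:ℝ) else 0) p := by
  classical
  set e₀ : Fin n → ℝ := fun j => if j = i₀ then (1:ℝ) else 0 with he₀
  conv_rhs => rw [p.as_sum, map_sum]
  have key : ∀ d ∈ p.support, eval e₀ (monomial d (p.coeff d))
      = if d = Finsupp.single i₀ D then p.coeff d else 0 := by
    intro d hd
    rw [eval_monomial]
    by_cases h : d = Finsupp.single i₀ D
    · subst h
      rw [if_pos rfl,
        Finsupp.prod_single_index (h := fun j e => e₀ j ^ e) (pow_zero _)]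
      simp [he₀]
    · rw [if_neg h]
      have hi : ∃ i ∈ d.support, i ≠ i₀ := by
        by_contra hc
        push_neg at hc
        apply h
        have hd0 : d = Finsupp.single i₀ (d i₀) := by
          ext j
          rcases eq_or_ne j i₀ with rfl | hj
          · simp
          · rw [Finsupp.single_apply, if_neg (by exact fun hh => hj hh.symm)]
            by_contra hj0
            exact hj (hc j (Finsupp.mem_support_iff.mpr hj0))
        have hsum := hp (mem_support_iff.mp hd)
        rw [wdeg] at hsum
        have : d i₀ = D := by
          rw [hd0, Finsupp.sum_single_index rfl] at hsum
          exact hsum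
        rw [hd0, this]
      obtain ⟨i, his, hii⟩ := hi
      rw [Finsupp.prod,
        Finset.prod_eq_zero his
          (by rw [he₀]; simp only []
              rw [if_neg hii, zero_pow (Finsupp.mem_support_iff.mp his)]),
        mul_zero]
  rw [Finset.sum_congr rfl key, Finset.sum_ite_eq']
  by_cases hs : Finsupp.single i₀ D ∈ p.support
  · rw [if_pos hs]
  · rw [if_neg hs, notMem_support_iff.mp hs]

lemma coeff_p0 (hn : 2 ≤ n) :
    ((Pd n).coeff 0).coeff (Finsupp.single ⟨0, by omega⟩ (2 ^ n)) = 1 := by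
  classical
  have h0 : ((Pd n).coeff 0).IsHomogeneous (2 ^ n) := by
    simpa using homog_Pd_coeff (n := n) 0
  set i₀ : Fin n := ⟨0, by omega⟩ with hi₀
  set i₁ : Fin n := ⟨1, by omega⟩ with hi₁
  have hne : i₁ ≠ i₀ := by
    rw [hi₀, hi₁]
    intro h
    exact absurd (congrArg Fin.val h) (by norm_num)
  set e₀ : Fin n → ℝ := fun j => if j = i₀ then (1:ℝ) else 0 with he₀
  rw [coeff_single_eq_eval i₀ h0, Polynomial.coeff_zero_eq_eval_zero, Pd,
    Polynomial.eval_prod, map_prod]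
  have hfac : ∀ ε : Fin n → Bool,
      eval e₀ (Polynomial.eval 0 (Polynomial.X - Polynomial.C (L ε)))
        = if ε i₀ then (-1 : ℝ) else 1 := by
    intro ε
    rw [Polynomial.eval_sub, Polynomial.eval_X, Polynomial.eval_C, zero_sub, map_neg]
    have hL : eval e₀ (L ε) = if ε i₀ then (1:ℝ) else -1 := by
      rw [L, map_sum]
      rw [Finset.sum_eq_single_of_mem i₀ (Finset.mem_univ _) (fun j _ hj => ?_)]
      · cases h : ε i₀ <;> simp [h, he₀]
      · cases h : ε j <;> simp [h, he₀, hj]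
    rw [hL]
    cases h : ε i₀ <;> simp [h]
  rw [Finset.prod_congr rfl fun ε _ => hfac ε]
  refine Finset.prod_involution
    (fun ε _ => Function.update ε i₁ (! ε i₁)) (fun ε _ => ?_) (fun ε _ _ => ?_)
    (fun ε _ => Finset.mem_univ _) (fun ε _ => update_invol i₁ ε)
  · cases h : ε i₀ <;>
      norm_num [h, Function.update_of_ne (Ne.symm hne)]
  · intro h
    have h2 := congrFun h i₁
    simp at h2

end SqElim

end SqElimSection

open SqElim in
/-- Square-elimination lemma: for `n ≥ 2` there is a family of polynomials
`H_{n,j}` in `n` variables (with `H_{n,0} = 1`, each `H_{n,j}` homogeneous of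
degree `j`, and the top one `H_{n,2^{n-1}}` monic of total degree `2^{n-1}`)
such that the polynomial
`Q = Σ_{j=0}^{2^{n-1}} H_{n,j}(s₁,…,sₙ) · δ^{2(2^{n-1}-j)}`
(in `n+1` variables, involving only even powers of δ) is non-zero and vanishes
at `(t₁², …, tₙ², δ)` whenever `t₁ + ⋯ + tₙ = δ`. -/
theorem square_elimination_family (n : ℕ) (hn : 2 ≤ n) :
    ∃ H : ℕ → MvPolynomial (Fin n) ℝ,
      H 0 = 1 ∧
      (∀ j, 1 ≤ j → j ≤ 2 ^ (n - 1) → (H j).IsHomogeneous j) ∧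
      (H (2 ^ (n - 1))).totalDegree = 2 ^ (n - 1) ∧
      (∃ d : Fin n →₀ ℕ, (d.sum fun _ e => e) = 2 ^ (n - 1) ∧
        (H (2 ^ (n - 1))).coeff d = 1) ∧
      (∑ j ∈ Finset.range (2 ^ (n - 1) + 1),
          (MvPolynomial.rename (Fin.castSucc) (H j)) *
            (MvPolynomial.X (Fin.last n) : MvPolynomial (Fin (n + 1)) ℝ) ^
              (2 * (2 ^ (n - 1) - j))) ≠ 0 ∧
      ∀ (t : Fin n → ℝ) (δ : ℝ), (∑ i, t i) = δ →
        ∑ j ∈ Finset.range (2 ^ (n - 1) + 1),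
          MvPolynomial.eval (fun i => (t i) ^ 2) (H j) * δ ^ (2 * (2 ^ (n - 1) - j)) = 0 := by
  classical
  set N := 2 ^ (n - 1) with hN
  have h2N : 2 * N = 2 ^ n := by
    rw [hN, ← pow_succ']
    congr 1
    omega
  set H : ℕ → MvPolynomial (Fin n) ℝ :=
    fun j => halve ((Pd n).coeff (2 * (N - j))) with hH
  have hH0 : H 0 = 1 := by
    show halve ((Pd n).coeff (2 * (N - 0))) = 1
    rw [Nat.sub_zero, h2N, ← natDegree_Pd, (monic_Pd).coeff_natDegree, halve_one]
  have hhomog : ∀ j, 1 ≤ j → j ≤ N → (H j).IsHomogeneous j := by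
    intro j h1 h2
    have h3 : 2 ^ n - 2 * (N - j) = 2 * j := by omega
    exact homog_halve (evenSupp_Pd_coeff _) (h3 ▸ homog_Pd_coeff _)
  have htop : ∃ d : Fin n →₀ ℕ, (d.sum fun _ e => e) = N ∧ (H N).coeff d = 1 := by
    refine ⟨Finsupp.single ⟨0, by omega⟩ N, ?_, ?_⟩
    · exact Finsupp.sum_single_index rfl
    · show (halve ((Pd n).coeff (2 * (N - N)))).coeff _ = 1
      rw [Nat.sub_self, Nat.mul_zero, coeff_halve (evenSupp_Pd_coeff 0)]
      have hds : double (Finsupp.single (⟨0, by omega⟩ : Fin n) N)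
          = Finsupp.single ⟨0, by omega⟩ (2 ^ n) := by
        ext i
        rw [double, Finsupp.mapRange_apply, Finsupp.single_apply, Finsupp.single_apply,
          ← h2N]
        by_cases h : (⟨0, by omega⟩ : Fin n) = i
        · rw [if_pos h, if_pos h]
        · rw [if_neg h, if_neg h, mul_zero]
      rw [hds, coeff_p0 hn]
  refine ⟨H, hH0, hhomog, ?_, htop, ?_, ?_⟩
  · obtain ⟨d, hd1, hd2⟩ := htop
    exact (hhomog N Nat.one_le_two_pow le_rfl).totalDegree
      (ne_zero_iff.mpr ⟨d, by rw [hd2]; norm_num⟩)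
  · intro hQ
    have heval := congrArg
      (eval (fun i : Fin (n+1) => if i = Fin.last n then (1:ℝ) else 0)) hQ
    rw [map_sum, map_zero] at heval
    have hterm : ∀ j ∈ Finset.range (N + 1),
        eval (fun i : Fin (n+1) => if i = Fin.last n then (1:ℝ) else 0)
          ((rename Fin.castSucc) (H j) * X (Fin.last n) ^ (2 * (N - j)))
          = (H j).coeff 0 := by
      intro j _
      have hcomp : ((fun i : Fin (n+1) => if i = Fin.last n then (1:ℝ) else 0)
          ∘ Fin.castSucc) = (0 : Fin n → ℝ) :=
        funext fun i => if_neg (Fin.castSucc_lt_last i).ne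
      rw [map_mul, map_pow, eval_X, eval_rename, hcomp, eval_zero, constantCoeff_eq]
      simp
    rw [Finset.sum_congr rfl hterm] at heval
    rw [Finset.sum_eq_single_of_mem 0 (by simp) (fun j hjm hj => ?_)] at heval
    · rw [hH0] at heval
      simp at heval
    · have hjm2 : j < N + 1 := Finset.mem_range.mp hjm
      refine (hhomog j (by omega) (by omega)).coeff_eq_zero ?_
      rw [show (0 : Fin n →₀ ℕ).degree = 0 from map_zero _]
      omega
  · intro t δ hδ
    have hcongr : ∀ j ∈ Finset.range (N + 1),
        eval (fun i => t i ^ 2) (H j) * δ ^ (2 * (N - j))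
          = eval t ((Pd n).coeff (2 * (N - j))) * δ ^ (2 * (N - j)) :=
      fun j _ => congrArg (fun z => z * δ ^ (2 * (N - j)))
        (eval_halve (evenSupp_Pd_coeff (2 * (N - j))) t)
    rw [Finset.sum_congr rfl hcongr]
    have hrefl := Finset.sum_range_reflect
      (fun j => eval t ((Pd n).coeff (2 * j)) * δ ^ (2 * j)) (N + 1)
    simp only [Nat.add_sub_cancel] at hrefl
    rw [hrefl]
    have himg : ∑ j ∈ Finset.range (N + 1), eval t ((Pd n).coeff (2 * j)) * δ ^ (2 * j)
        = ∑ k ∈ Finset.range (2 * N + 1), eval t ((Pd n).coeff k) * δ ^ k := by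
      rw [← Finset.sum_image (g := fun j => 2 * j)
        (f := fun k => eval t ((Pd n).coeff k) * δ ^ k)
        (fun x _ y _ h => by simp only [] at h; omega)]
      apply Finset.sum_subset
      · intro k hk
        simp only [Finset.mem_image, Finset.mem_range] at *
        obtain ⟨j, hj, rfl⟩ := hk
        omega
      · intro k hk hk'
        have hodd : ¬ Even k := by
          simp only [Finset.mem_image, Finset.mem_range] at *
          rintro ⟨m, rfl⟩
          exact hk' ⟨m, by omega, by omega⟩
        rw [Pd_coeff_odd (by omega) k hodd, map_zero, zero_mul]
    rw [himg]
    have hdeg : ((Pd n).map (eval t)).natDegree < 2 * N + 1 :=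
      lt_of_le_of_lt Polynomial.natDegree_map_le (by rw [natDegree_Pd]; omega)
    have hsum := Polynomial.eval_eq_sum_range' hdeg δ
    simp only [Polynomial.coeff_map] at hsum
    rw [← hsum, Pd, Polynomial.map_prod, Polynomial.eval_prod]
    apply Finset.prod_eq_zero (Finset.mem_univ (fun _ : Fin n => true))
    rw [Polynomial.map_sub, Polynomial.map_X, Polynomial.map_C,
      Polynomial.eval_sub, Polynomial.eval_X, Polynomial.eval_C, L, map_sum]
    simp [hδ]
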